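/- arXiv:1707.05556 — 4 statements merged into one kernel-verified Lean document; each statement's English description precedes it below -/
import Mathlib

section
/- Let K be a compact metric space with finite Borel measure μ and let S be a semigroup on L²(K,μ). Suppose S_t L²(K) ⊆ C(K) and S_t* L²(K) ⊆ C(K) for all t > 0. Then for every t > 0 the operator S_t has a continuous kernel: there exists a continuous function k_t : K × K → ℂ such that (S_t u)(x) = ∫_K k_t(x,y) u(y) dμ(y) for almost every x ∈ K and all u ∈ L²(K). -/
set_option linter.unusedSectionVars false

open MeasureTheory ENNReal Filter Topology ComplexConjugate
open scoped ComplexInnerProductSpace NNReal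

namespace Stmt1Aux

variable {K : Type*} [MetricSpace K] [CompactSpace K] [MeasurableSpace K] [BorelSpace K]
  (μ : Measure K) [IsFiniteMeasure μ]

/-- The topological support of the measure `μ`. -/
def msupp : Set K := {x | ∀ U : Set K, IsOpen U → x ∈ U → μ U ≠ 0}

lemma isClosed_msupp : IsClosed (msupp μ) := by
  rw [← isOpen_compl_iff, isOpen_iff_forall_mem_open]
  intro x hx
  have hex : ∃ U : Set K, IsOpen U ∧ x ∈ U ∧ μ U = 0 := by
    by_contra hcon
    push_neg at hcon
    exact hx fun U hU hxU => hcon U hU hxU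
  obtain ⟨U, hUo, hxU, hU0⟩ := hex
  refine ⟨U, fun y hy => ?_, hUo, hxU⟩
  intro hmem
  exact hmem U hUo hy hU0

lemma measure_compl_msupp : μ (msupp μ)ᶜ = 0 := by
  obtain ⟨T, hTc, hTsub, hTU⟩ := TopologicalSpace.isOpen_sUnion_countable
    {U : Set K | IsOpen U ∧ μ U = 0} (fun U hU => hU.1)
  have h1 : (msupp μ)ᶜ ⊆ ⋃₀ T := by
    rw [hTU]
    intro x hx
    have hex : ∃ U : Set K, IsOpen U ∧ x ∈ U ∧ μ U = 0 := by
      by_contra hcon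
      push_neg at hcon
      exact hx fun U hU hxU => hcon U hU hxU
    obtain ⟨U, hUo, hxU, hU0⟩ := hex
    exact ⟨U, ⟨hUo, hU0⟩, hxU⟩
  refine measure_mono_null h1 ?_
  rw [measure_sUnion_null_iff hTc]
  exact fun U hU => (hTsub hU).2

lemma ae_mem_msupp : ∀ᵐ x ∂μ, x ∈ msupp μ := by
  rw [ae_iff]
  exact measure_compl_msupp μ

lemma eqOn_msupp_of_ae_eq {f g : K → ℂ} (hf : ContinuousOn f (msupp μ))
    (hg : ContinuousOn g (msupp μ)) (hae : f =ᵐ[μ] g) : Set.EqOn f g (msupp μ) := by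
  intro x hx
  by_contra hne
  have hcw : ContinuousWithinAt (fun y => f y - g y) (msupp μ) x := (hf x hx).sub (hg x hx)
  have hmem : {z : ℂ | z ≠ 0} ∈ nhds (f x - g x) :=
    isOpen_ne.mem_nhds (sub_ne_zero.mpr hne)
  have hev : ∀ᶠ y in nhdsWithin x (msupp μ), f y - g y ≠ 0 := hcw hmem
  obtain ⟨U, hUo, hxU, hU⟩ := mem_nhdsWithin.mp hev
  have hUnull : μ U = 0 := by
    have hsub : U ⊆ {y | f y = g y}ᶜ ∪ (msupp μ)ᶜ := by
      intro y hy
      by_cases h1 : y ∈ msupp μ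
      · left
        intro h2
        exact hU ⟨hy, h1⟩ (sub_eq_zero_of_eq h2)
      · right; exact h1
    refine measure_mono_null hsub (measure_union_null ?_ (measure_compl_msupp μ))
    exact hae
  exact hx U hUo hxU hUnull

instance : CompactSpace (msupp μ) :=
  isCompact_iff_compactSpace.mp (isClosed_msupp μ).isCompact

variable {μ}
variable {T : Lp ℂ 2 μ →L[ℂ] Lp ℂ 2 μ}

section Lift

variable (hT : ∀ f : Lp ℂ 2 μ, ∃ g : C(K, ℂ), (T f : K → ℂ) =ᵐ[μ] g)

/-- A continuous representative of `T f`. -/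
noncomputable def ver (f : Lp ℂ 2 μ) : C(K, ℂ) := (hT f).choose

lemma ver_ae (f : Lp ℂ 2 μ) : (T f : K → ℂ) =ᵐ[μ] ver hT f := (hT f).choose_spec

/-- The operator `T` seen as a linear map into `C(supp μ, ℂ)`. -/
noncomputable def liftL : Lp ℂ 2 μ →ₗ[ℂ] C(msupp μ, ℂ) where
  toFun f := (ver hT f).restrict (msupp μ)
  map_add' f₁ f₂ := by
    ext z
    have h12 : (T (f₁ + f₂) : K → ℂ) =ᵐ[μ] fun y => (T f₁ : K → ℂ) y + (T f₂ : K → ℂ) y := by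
      rw [map_add]
      exact Lp.coeFn_add _ _
    have hae : (ver hT (f₁ + f₂) : K → ℂ) =ᵐ[μ] fun y => ver hT f₁ y + ver hT f₂ y := by
      filter_upwards [ver_ae hT (f₁ + f₂), h12, ver_ae hT f₁, ver_ae hT f₂] with y h1 h2 h3 h4
      rw [← h1, h2, h3, h4]
    have heq := eqOn_msupp_of_ae_eq μ (ver hT (f₁ + f₂)).continuous.continuousOn
      (((ver hT f₁).continuous.add (ver hT f₂).continuous).continuousOn) hae
    simpa using heq z.2
  map_smul' c f := by
    ext z
    have h12 : (T (c • f) : K → ℂ) =ᵐ[μ] fun y => c • (T f : K → ℂ) y := by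
      rw [_root_.map_smul]
      exact Lp.coeFn_smul _ _
    have hae : (ver hT (c • f) : K → ℂ) =ᵐ[μ] fun y => c • ver hT f y := by
      filter_upwards [ver_ae hT (c • f), h12, ver_ae hT f] with y h1 h2 h3
      rw [← h1, h2, h3]
    have heq := eqOn_msupp_of_ae_eq μ (ver hT (c • f)).continuous.continuousOn
      ((ver hT f).continuous.const_smul c).continuousOn hae
    simpa using heq z.2

lemma continuous_liftL : Continuous (liftL hT) := by
  classical
  apply LinearMap.continuous_of_seq_closed_graph
  intro u f c hu hc
  have hTf : Tendsto (fun n => T (u n)) atTop (nhds (T f)) := (T.continuous.tendsto f).comp hu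
  have him : TendstoInMeasure μ (fun n => (T (u n) : K → ℂ)) atTop (T f : K → ℂ) :=
    tendstoInMeasure_of_tendsto_Lp hTf
  obtain ⟨ns, hns_mono, hns⟩ := him.exists_seq_tendsto_ae
  have hallver : ∀ᵐ y ∂μ, ∀ n, (T (u n) : K → ℂ) y = ver hT (u n) y :=
    ae_all_iff.mpr fun n => ver_ae hT (u n)
  set F : K → ℂ := fun y => if hy : y ∈ msupp μ then c ⟨y, hy⟩ else ver hT f y with hF
  have haeF : (ver hT f : K → ℂ) =ᵐ[μ] F := by
    filter_upwards [hns, hallver, ver_ae hT f, ae_mem_msupp μ] with y h1 h2 h3 h4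
    have hFy : F y = c ⟨y, h4⟩ := dif_pos h4
    have hlim2 : Tendsto (fun i => (T (u (ns i)) : K → ℂ) y) atTop (nhds (c ⟨y, h4⟩)) := by
      have hcs : Tendsto (fun i => (liftL hT) (u (ns i))) atTop (nhds c) :=
        hc.comp hns_mono.tendsto_atTop
      have hev := ((continuous_eval_const
        (⟨y, h4⟩ : msupp μ)).tendsto c).comp hcs
      refine hev.congr fun i => ?_
      exact (h2 (ns i)).symm
    have huniq := tendsto_nhds_unique h1 hlim2
    rw [hFy, ← huniq, h3]
  have hFcont : ContinuousOn F (msupp μ) := by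
    rw [continuousOn_iff_continuous_restrict]
    have hres : (msupp μ).restrict F = fun z : msupp μ => c z := by
      funext z
      simp only [Set.restrict_apply, hF]
      exact dif_pos z.2
    change Continuous ((msupp μ).restrict F)
    rw [hres]
    exact c.continuous
  have heq := eqOn_msupp_of_ae_eq μ (ver hT f).continuous.continuousOn hFcont haeF
  ext z
  have hz := heq z.2
  have hFz : F z.1 = c z := by
    simp only [hF]
    rw [dif_pos z.2]
  rw [← hFz, ← hz]
  rfl

/-- The operator `T` as a continuous linear map into `C(supp μ, ℂ)`. -/
noncomputable def liftCLM : Lp ℂ 2 μ →L[ℂ] C(msupp μ, ℂ) :=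
  ⟨liftL hT, continuous_liftL hT⟩

lemma liftCLM_apply (f : Lp ℂ 2 μ) (z : msupp μ) : liftCLM hT f z = ver hT f z.1 := rfl

/-- The vector representing the evaluation functional `v ↦ (T v)(x)`. -/
noncomputable def gfun (x : msupp μ) : Lp ℂ 2 μ :=
  (InnerProductSpace.toDual ℂ (Lp ℂ 2 μ)).symm ((ContinuousMap.evalCLM ℂ x).comp (liftCLM hT))

lemma inner_gfun (x : msupp μ) (v : Lp ℂ 2 μ) : ⟪gfun hT x, v⟫ = liftCLM hT v x :=
  InnerProductSpace.toDual_symm_apply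

lemma norm_gfun_le (x : msupp μ) : ‖gfun hT x‖ ≤ ‖liftCLM hT‖ := by
  rw [gfun, LinearIsometryEquiv.norm_map]
  refine ContinuousLinearMap.opNorm_le_bound _ (norm_nonneg _) fun v => ?_
  calc ‖((ContinuousMap.evalCLM ℂ x).comp (liftCLM hT)) v‖ = ‖liftCLM hT v x‖ := rfl
    _ ≤ ‖liftCLM hT v‖ := (liftCLM hT v).norm_coe_le_norm x
    _ ≤ ‖liftCLM hT‖ * ‖v‖ := (liftCLM hT).le_opNorm v

lemma continuous_inner_gfun (w : Lp ℂ 2 μ) :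
    Continuous fun x : msupp μ => ⟪w, gfun hT x⟫ := by
  have hrw : (fun x : msupp μ => ⟪w, gfun hT x⟫)
      = fun x => (starRingEnd ℂ) (liftCLM hT w x) := by
    funext x
    rw [← inner_gfun hT x w, inner_conj_symm]
  rw [hrw]
  exact RCLike.continuous_conj.comp (liftCLM hT w).continuous

end Lift

/-- Dominated convergence in `L²`. -/
lemma tendsto_Lp_of_ae_bound {e : ℕ → Lp ℂ 2 μ} {f : Lp ℂ 2 μ} (C : ℝ)
    (hb : ∀ n, ∀ᵐ x ∂μ, ‖(e n : K → ℂ) x‖ ≤ C)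
    (hconv : ∀ᵐ x ∂μ, Tendsto (fun n => (e n : K → ℂ) x) atTop (nhds ((f : K → ℂ) x))) :
    Tendsto e atTop (nhds f) := by
  have hui : UnifIntegrable (fun n => ((e n : K → ℂ))) 2 μ := by
    refine unifIntegrable_of one_le_two ENNReal.ofNat_ne_top
      (fun n => Lp.aestronglyMeasurable _) fun ε hε => ?_
    refine ⟨C.toNNReal + 1, fun i => ?_⟩
    have h0 : {x | (C.toNNReal + 1 : ℝ≥0) ≤ ‖(e i : K → ℂ) x‖₊}.indicator ((e i : K → ℂ))
        =ᵐ[μ] 0 := by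
      filter_upwards [hb i] with x hx
      rw [Set.indicator_of_notMem, Pi.zero_apply]
      intro hmem
      simp only [Set.mem_setOf_eq] at hmem
      have h1 : ((C.toNNReal + 1 : ℝ≥0) : ℝ) ≤ ‖(e i : K → ℂ) x‖ := by
        exact_mod_cast NNReal.coe_le_coe.mpr hmem
    -- derive contradiction
      have h2 : (C.toNNReal : ℝ) + 1 ≤ C := by
        push_cast at h1
        linarith [hx]
      have h3 : C ≤ (C.toNNReal : ℝ) := by
        rw [Real.coe_toNNReal']
        exact le_max_left _ _
      linarith
    rw [eLpNorm_congr_ae h0]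
    simp
  have ht := tendsto_Lp_finite_of_tendsto_ae one_le_two ENNReal.ofNat_ne_top
    (fun n => Lp.aestronglyMeasurable _) (Lp.memLp f) hui hconv
  rw [tendsto_iff_dist_tendsto_zero]
  have hd : ∀ n, dist (e n) f = (eLpNorm ((e n : K → ℂ) - (f : K → ℂ)) 2 μ).toReal := by
    intro n
    rw [Lp.dist_def]
  simp_rw [hd]
  have h0 : Tendsto (fun n => (eLpNorm ((e n : K → ℂ) - (f : K → ℂ)) 2 μ).toReal) atTop
      (nhds ((0 : ℝ≥0∞)).toReal) :=
    (ENNReal.tendsto_toReal (by simp)).comp ht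
  simpa using h0

end Stmt1Aux

open Stmt1Aux

/-- If `S` is a semigroup on `L²(K,μ)` (`K` compact metric, `μ` finite Borel)
with `S_t L² ⊆ C(K)` and `S_t* L² ⊆ C(K)` for all `t > 0`, then every `S_t` has a continuous
kernel `k_t : K × K → ℂ` with `(S_t u)(x) = ∫ k_t(x,y) u(y) dμ(y)` for a.e. `x`. -/
theorem stmt1
    {K : Type*} [MetricSpace K] [CompactSpace K] [MeasurableSpace K] [BorelSpace K]
    (μ : Measure K) [IsFiniteMeasure μ]
    (S : ℝ → Lp ℂ 2 μ →L[ℂ] Lp ℂ 2 μ)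
    (hsg : ∀ t s : ℝ, 0 < t → 0 < s → S (t + s) = (S t).comp (S s))
    (h : ∀ t : ℝ, 0 < t →
      (∀ f : Lp ℂ 2 μ, ∃ g : C(K, ℂ), (S t f : K → ℂ) =ᵐ[μ] g) ∧
      (∀ f : Lp ℂ 2 μ, ∃ g : C(K, ℂ), (ContinuousLinearMap.adjoint (S t) f : K → ℂ) =ᵐ[μ] g)) :
    ∀ t : ℝ, 0 < t → ∃ k : C(K × K, ℂ),
      ∀ u : Lp ℂ 2 μ, ∀ᵐ x ∂μ, (S t u : K → ℂ) x = ∫ y, k (x, y) * (u : K → ℂ) y ∂μ := by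
  intro t ht
  set s := t / 3 with hs_def
  have hs : 0 < s := by positivity
  obtain ⟨hA', hB'⟩ := h s hs
  -- continuity of the middle map
  have he_cont : Continuous fun x : msupp μ =>
      ContinuousLinearMap.adjoint (S s) (gfun hA' x) := by
    rw [continuous_iff_seqContinuous]
    intro xs x hxs
    simp only [Function.comp_def]
    refine tendsto_Lp_of_ae_bound (‖liftCLM hB'‖ * ‖liftCLM hA'‖) ?_ ?_
    · intro n
      filter_upwards [ver_ae hB' (gfun hA' (xs n)), ae_mem_msupp μ] with y h1 h2
      rw [h1]
      have h3 : ver hB' (gfun hA' (xs n)) y = liftCLM hB' (gfun hA' (xs n)) ⟨y, h2⟩ := rfl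
      rw [h3]
      calc ‖liftCLM hB' (gfun hA' (xs n)) ⟨y, h2⟩‖
          ≤ ‖liftCLM hB' (gfun hA' (xs n))‖ :=
            (liftCLM hB' (gfun hA' (xs n))).norm_coe_le_norm _
        _ ≤ ‖liftCLM hB'‖ * ‖gfun hA' (xs n)‖ := (liftCLM hB').le_opNorm _
        _ ≤ ‖liftCLM hB'‖ * ‖liftCLM hA'‖ :=
            mul_le_mul_of_nonneg_left (norm_gfun_le hA' _) (norm_nonneg _)
    · have hall : ∀ᵐ y ∂μ, ∀ n,
          (ContinuousLinearMap.adjoint (S s) (gfun hA' (xs n)) : K → ℂ) y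
            = ver hB' (gfun hA' (xs n)) y :=
        ae_all_iff.mpr fun n => ver_ae hB' _
      filter_upwards [hall, ver_ae hB' (gfun hA' x), ae_mem_msupp μ] with y h1 h2 h3
      have hz : ∀ n, (ContinuousLinearMap.adjoint (S s) (gfun hA' (xs n)) : K → ℂ) y
          = ⟪gfun hB' ⟨y, h3⟩, gfun hA' (xs n)⟫ := by
        intro n
        rw [h1 n]
        exact (inner_gfun hB' ⟨y, h3⟩ _).symm
      have hz' : (ContinuousLinearMap.adjoint (S s) (gfun hA' x) : K → ℂ) y
          = ⟪gfun hB' ⟨y, h3⟩, gfun hA' x⟫ := by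
        rw [h2]
        exact (inner_gfun hB' ⟨y, h3⟩ _).symm
      rw [hz']
      refine Tendsto.congr (fun n => (hz n).symm) ?_
      exact ((continuous_inner_gfun hA' (gfun hB' ⟨y, h3⟩)).tendsto x).comp hxs
  -- the kernel on the support
  have hΦ : Continuous fun x : msupp μ =>
      liftCLM hB' (ContinuousLinearMap.adjoint (S s) (gfun hA' x)) :=
    (liftCLM hB').continuous.comp he_cont
  have hk'cont : Continuous fun p : msupp μ × msupp μ =>
      (starRingEnd ℂ) (liftCLM hB' (ContinuousLinearMap.adjoint (S s) (gfun hA' p.1)) p.2) := by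
    apply RCLike.continuous_conj.comp
    exact continuous_eval.comp ((hΦ.comp continuous_fst).prodMk continuous_snd)
  -- extend by Tietze
  have hclosed : IsClosed ((msupp μ) ×ˢ (msupp μ)) := (isClosed_msupp μ).prod (isClosed_msupp μ)
  obtain ⟨k, hk⟩ := ContinuousMap.exists_restrict_eq (Y := ℂ) hclosed
    ⟨fun p => (starRingEnd ℂ) (liftCLM hB' (ContinuousLinearMap.adjoint (S s)
        (gfun hA' ((Homeomorph.Set.prod (msupp μ) (msupp μ)) p).1))
        ((Homeomorph.Set.prod (msupp μ) (msupp μ)) p).2),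
      hk'cont.comp (Homeomorph.Set.prod (msupp μ) (msupp μ)).continuous⟩
  have hkeq : ∀ (x y : K) (hx : x ∈ msupp μ) (hy : y ∈ msupp μ),
      k (x, y) = (starRingEnd ℂ)
        (liftCLM hB' (ContinuousLinearMap.adjoint (S s) (gfun hA' ⟨x, hx⟩)) ⟨y, hy⟩) := by
    intro x y hx hy
    have := DFunLike.congr_fun hk ⟨(x, y), ⟨hx, hy⟩⟩
    exact this
  refine ⟨k, fun u => ?_⟩
  -- semigroup splitting
  have hStu : S t u = S s (S s (S s u)) := by
    have h3 : t = s + (s + s) := by rw [hs_def]; ring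
    rw [h3, hsg s (s + s) hs (by positivity), hsg s s hs hs]
    rfl
  have h1 : (S t u : K → ℂ) =ᵐ[μ] ver hA' (S s (S s u)) := by
    rw [hStu]
    exact ver_ae hA' _
  have hinner : ∀ x : msupp μ, (ver hA' (S s (S s u)) x.1 : ℂ)
      = ⟪ContinuousLinearMap.adjoint (S s) (ContinuousLinearMap.adjoint (S s) (gfun hA' x)), u⟫ := by
    intro x
    have e1 : (ver hA' (S s (S s u)) x.1 : ℂ) = ⟪gfun hA' x, S s (S s u)⟫ :=
      (inner_gfun hA' x _).symm
    rw [e1, ← ContinuousLinearMap.adjoint_inner_left, ← ContinuousLinearMap.adjoint_inner_left]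
  have hint : ∀ x : msupp μ,
      ⟪ContinuousLinearMap.adjoint (S s) (ContinuousLinearMap.adjoint (S s) (gfun hA' x)), u⟫
        = ∫ y, k (x.1, y) * (u : K → ℂ) y ∂μ := by
    intro x
    rw [MeasureTheory.L2.inner_def]
    refine integral_congr_ae ?_
    filter_upwards [ver_ae hB' (ContinuousLinearMap.adjoint (S s) (gfun hA' x)),
      ae_mem_msupp μ] with y hy1 hy2
    rw [RCLike.inner_apply, hy1, hkeq x.1 y x.2 hy2]
    exact mul_comm _ _
  filter_upwards [h1, ae_mem_msupp μ] with x hx1 hx2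
  rw [hx1]
  have h2 := hinner ⟨x, hx2⟩
  rw [h2, hint ⟨x, hx2⟩]
end

section
/- Let X be a topological space and, for each z in a compact metric space K with finite Borel measure μ, let h_z : K × K → ℂ be given by h_z(x,y) = f(x,z) g(z,y) where f, g : K × K → ℂ are separately continuous in each variable and uniformly bounded. Then (x,y) ↦ ∫_K f(x,z) g(z,y) dμ(z) is jointly continuous on K × K. -/
open MeasureTheory ENNReal

/-- Let `K` be a compact metric space with a finite Borel measure `μ` and let
`f, g : K × K → ℂ` be uniformly bounded and separately continuous in each variable.  Then
`(x,y) ↦ ∫ f(x,z) g(z,y) dμ(z)` is jointly continuous on `K × K`. -/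
theorem stmt3
    {K : Type*} [MetricSpace K] [CompactSpace K] [MeasurableSpace K] [BorelSpace K]
    (μ : Measure K) [IsFiniteMeasure μ]
    (f g : K × K → ℂ) (C : ℝ)
    (hfb : ∀ p : K × K, ‖f p‖ ≤ C) (hgb : ∀ p : K × K, ‖g p‖ ≤ C)
    (hf1 : ∀ y : K, Continuous fun x => f (x, y))
    (hf2 : ∀ x : K, Continuous fun y => f (x, y))
    (hg1 : ∀ y : K, Continuous fun x => g (x, y))
    (hg2 : ∀ x : K, Continuous fun y => g (x, y)) :
    Continuous fun p : K × K => ∫ z, f (p.1, z) * g (z, p.2) ∂μ := by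
  rw [continuous_iff_continuousAt]
  intro p
  apply tendsto_integral_filter_of_dominated_convergence (fun _ => C * C)
  · filter_upwards with q
    exact (((hf2 q.1).mul (hg1 q.2))).aestronglyMeasurable
  · filter_upwards with q
    filter_upwards with z
    calc ‖f (q.1, z) * g (z, q.2)‖ = ‖f (q.1, z)‖ * ‖g (z, q.2)‖ := norm_mul _ _
      _ ≤ C * C := by
          have h0 : (0:ℝ) ≤ ‖f (q.1, z)‖ := norm_nonneg _
          exact mul_le_mul (hfb _) (hgb _) (norm_nonneg _) (le_trans h0 (hfb _))
  · exact integrable_const _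
  · filter_upwards with z
    exact (((hf1 z).comp continuous_fst).mul ((hg2 z).comp continuous_snd)).continuousAt
end

section
/- Let K be a compact connected metric space and μ a finite Borel measure on K with supp μ = K. Let S be a positive C₀-semigroup on L²(K,μ) with self-adjoint generator −A such that S_t L²(K) ⊆ C(K) for all t > 0, and let S^c_t = S_t|_{C(K)}. If for all x ∈ K there exist t > 0 and f ∈ C(K) with (S^c_t f)(x) ≠ 0, then the semigroup S^c on C(K) is irreducible. -/
open MeasureTheory ENNReal Filter

open RealInnerProductSpace

/-- Let `K` be a compact connected metric space, `μ` a finite Borel measure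
with full support.  Let `S` be a positive `C₀`-semigroup on `L²(K,μ)` with self-adjoint
generator, such that `S_t L² ⊆ C(K)` for all `t > 0`.  If for every `x ∈ K` there are `t > 0`
and `f ∈ C(K)` with `(S^c_t f)(x) ≠ 0`, then the restricted semigroup `S^c` on `C(K)` is
irreducible: no closed ideal `{f ∈ C(K) : f|_B = 0}`, with `B` closed, `∅ ≠ B ≠ K`, is
invariant under all `S^c_t`. -/
theorem stmt4
    {K : Type*} [MetricSpace K] [CompactSpace K] [ConnectedSpace K]
    [MeasurableSpace K] [BorelSpace K]
    (μ : Measure K) [IsFiniteMeasure μ]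
    (hsupp : ∀ U : Set K, IsOpen U → U.Nonempty → 0 < μ U)
    (S : ℝ → Lp ℝ 2 μ →L[ℝ] Lp ℝ 2 μ)
    (hsg : ∀ t s : ℝ, 0 < t → 0 < s → S (t + s) = (S t).comp (S s))
    (hc0 : ∀ f : Lp ℝ 2 μ, Tendsto (fun t => S t f) (nhdsWithin 0 (Set.Ioi 0)) (nhds f))
    (hsa : ∀ t : ℝ, 0 < t → IsSelfAdjoint (S t))
    (hpos : ∀ t : ℝ, 0 < t → ∀ f : Lp ℝ 2 μ, 0 ≤ f → 0 ≤ S t f)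
    (hreg : ∀ t : ℝ, 0 < t → ∀ f : Lp ℝ 2 μ, ∃ g : C(K, ℝ), (S t f : K → ℝ) =ᵐ[μ] g)
    (hnondeg : ∀ x : K, ∃ t : ℝ, 0 < t ∧ ∃ f g : C(K, ℝ),
      (S t (ContinuousMap.toLp 2 μ ℝ f) : K → ℝ) =ᵐ[μ] g ∧ g x ≠ 0) :
    ∀ B : Set K, IsClosed B → B.Nonempty → B ≠ Set.univ →
      ¬ (∀ t : ℝ, 0 < t → ∀ f : C(K, ℝ), (∀ x ∈ B, f x = 0) →
          ∀ g : C(K, ℝ), (S t (ContinuousMap.toLp 2 μ ℝ f) : K → ℝ) =ᵐ[μ] g →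
          ∀ x ∈ B, g x = 0) := by
  intro B hBclosed hBne hBne_univ Hinv
  haveI hops : μ.IsOpenPosMeasure := ⟨fun U hU hne => (hsupp U hU hne).ne'⟩
  -- uniqueness of continuous representatives
  have huniq : ∀ g₁ g₂ : C(K, ℝ), (g₁ : K → ℝ) =ᵐ[μ] (g₂ : K → ℝ) → g₁ = g₂ := fun g₁ g₂ h =>
    ContinuousMap.coe_injective ((g₁.continuous.ae_eq_iff_eq μ g₂.continuous).mp h)
  -- a continuous function which is a.e. nonnegative is nonnegative everywhere
  have hae_nonneg : ∀ g : C(K, ℝ), (0 : K → ℝ) ≤ᵐ[μ] (g : K → ℝ) → ∀ y, 0 ≤ g y := by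
    intro g hg y
    by_contra hlt
    push_neg at hlt
    have hopen : IsOpen {z | g z < 0} := isOpen_lt g.continuous continuous_const
    have h0 : μ {z | g z < 0} = 0 := by
      refine measure_mono_null ?_ (ae_iff.mp hg)
      intro z hz
      simp only [Set.mem_setOf_eq, Pi.zero_apply, not_le]
      exact hz
    exact absurd h0 (hsupp _ hopen ⟨y, hlt⟩).ne'
  set U : Set K := Bᶜ with hUdef
  -- the boundary point
  have hmeet : (B ∩ closure U).Nonempty := by
    by_contra hcon
    rw [Set.not_nonempty_iff_eq_empty] at hcon
    have hBeq : B = (closure U)ᶜ := by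
      apply Set.Subset.antisymm
      · intro z hz hz'
        exact Set.eq_empty_iff_forall_notMem.mp hcon z ⟨hz, hz'⟩
      · intro z hz
        by_contra hzB
        exact hz (subset_closure hzB)
    have hBopen : IsOpen B := by rw [hBeq]; exact isClosed_closure.isOpen_compl
    rcases isClopen_iff.mp ⟨hBclosed, hBopen⟩ with h | h
    · exact hBne.ne_empty h
    · exact hBne_univ h
  obtain ⟨x, hxB, hxU⟩ := hmeet
  obtain ⟨t, ht, f₀, g₀, hfg₀, hg₀x⟩ := hnondeg x
  set s : ℝ := t / 2 with hsdef
  have hs : 0 < s := half_pos ht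
  have hts : s + s = t := add_halves t
  -- the continuous-representative map for time `s`
  choose Tf hTf using hreg s hs
  -- `toLp` of the representative recovers the Lp element
  have hTLp : ∀ h : Lp ℝ 2 μ, ContinuousMap.toLp 2 μ ℝ (Tf h) = S s h := by
    intro h
    exact Lp.ext ((ContinuousMap.coeFn_toLp μ (Tf h)).trans (hTf h).symm)
  -- linearity of Tf
  have hTadd : ∀ h₁ h₂ : Lp ℝ 2 μ, Tf (h₁ + h₂) = Tf h₁ + Tf h₂ := by
    intro h₁ h₂
    apply huniq
    have h1 := (hTf (h₁ + h₂)).symm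
    have h2 := hTf h₁
    have h3 := hTf h₂
    have h4 : (S s (h₁ + h₂) : K → ℝ) =ᵐ[μ] fun a => S s h₁ a + S s h₂ a := by
      rw [map_add]
      exact Lp.coeFn_add _ _
    filter_upwards [h1, h2, h3, h4] with a ha1 ha2 ha3 ha4
    simp only [ContinuousMap.coe_add, Pi.add_apply]
    rw [← ha2, ← ha3, ← ha4, ha1]
  have hTsmul : ∀ (r : ℝ) (h : Lp ℝ 2 μ), Tf (r • h) = r • Tf h := by
    intro r h
    apply huniq
    have h1 := (hTf (r • h)).symm
    have h2 := hTf h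
    have h4 : (S s (r • h) : K → ℝ) =ᵐ[μ] fun a => r • S s h a := by
      rw [ContinuousLinearMap.map_smul]
      exact Lp.coeFn_smul _ _
    filter_upwards [h1, h2, h4] with a ha1 ha2 ha4
    rw [ha1, ha4]
    simp only [ContinuousMap.coe_smul, Pi.smul_apply, smul_eq_mul, ha2]
  let Tlin : Lp ℝ 2 μ →ₗ[ℝ] C(K, ℝ) :=
    { toFun := Tf
      map_add' := hTadd
      map_smul' := hTsmul }
  -- continuity via the closed graph theorem
  have Tcont : Continuous Tlin := by
    apply Tlin.continuous_of_seq_closed_graph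
    intro u x' y hu hy
    apply huniq
    have h1 : Tendsto (fun n => S s (u n)) atTop (nhds (S s x')) :=
      ((S s).continuous.tendsto x').comp hu
    have h2 : Tendsto (fun n => ContinuousMap.toLp 2 μ ℝ ((Tlin ∘ u) n)) atTop
        (nhds (ContinuousMap.toLp 2 μ ℝ y)) :=
      ((ContinuousMap.toLp 2 μ ℝ).continuous.tendsto y).comp hy
    have h3 : (fun n => ContinuousMap.toLp 2 μ ℝ ((Tlin ∘ u) n)) = fun n => S s (u n) := by
      funext n
      exact hTLp (u n)
    rw [h3] at h2
    have h4 : ContinuousMap.toLp 2 μ ℝ y = S s x' := tendsto_nhds_unique h2 h1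
    have h5 : (y : K → ℝ) =ᵐ[μ] S s x' := by
      rw [← h4]
      exact (ContinuousMap.coeFn_toLp μ y).symm
    exact h5.trans (hTf x')
  let Tclm : Lp ℝ 2 μ →L[ℝ] C(K, ℝ) := ⟨Tlin, Tcont⟩
  -- the "kernel" function
  let k : K → Lp ℝ 2 μ := fun y =>
    (InnerProductSpace.toDual ℝ (Lp ℝ 2 μ)).symm ((ContinuousMap.evalCLM ℝ y).comp Tclm)
  have hk : ∀ (y : K) (h : Lp ℝ 2 μ), ⟪k y, h⟫ = Tf h y := by
    intro y h
    exact InnerProductSpace.toDual_symm_apply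
  -- inner products as integrals
  have hinner : ∀ h₁ h₂ : Lp ℝ 2 μ, ⟪h₁, h₂⟫ = ∫ a, h₁ a * h₂ a ∂μ := by
    intro h₁ h₂
    rw [MeasureTheory.L2.inner_def]
    simp [RCLike.inner_apply]
    exact integral_congr_ae (Eventually.of_forall fun a => mul_comm _ _)
  -- positivity of representatives
  have hTpos : ∀ h : Lp ℝ 2 μ, 0 ≤ h → ∀ y, 0 ≤ Tf h y := by
    intro h hh y
    have h1 : (0 : K → ℝ) ≤ᵐ[μ] S s h := (Lp.coeFn_nonneg _).mpr (hpos s hs h hh)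
    refine hae_nonneg (Tf h) ?_ y
    filter_upwards [h1, hTf h] with a ha hb
    rw [← hb]
    exact ha
  -- nonnegativity of the kernel
  have hknonneg : ∀ y : K, 0 ≤ k y := by
    intro y
    set n : Lp ℝ 2 μ := Lp.negPart (k y) with hn
    have hn_nonneg : 0 ≤ n := by
      rw [← Lp.coeFn_nonneg]
      filter_upwards [Lp.coeFn_negPart (k y)] with a ha
      rw [ha]
      simp [neg_nonneg, min_le_right]
    have h1 : 0 ≤ Tf n y := hTpos n hn_nonneg y
    have h2 : ⟪k y, n⟫ = -⟪n, n⟫ := by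
      rw [hinner, hinner, ← integral_neg]
      apply integral_congr_ae
      filter_upwards [Lp.coeFn_negPart (k y)] with a ha
      rw [ha]
      rcases le_or_gt 0 (k y a) with hv | hv
      · rw [min_eq_right hv]
        ring
      · rw [min_eq_left hv.le]
        ring
    have h3 : ⟪n, n⟫ = 0 := by
      have h4 : 0 ≤ -⟪n, n⟫ := by rw [← h2, hk]; exact h1
      have h5 : (0 : ℝ) ≤ ⟪n, n⟫ := real_inner_self_nonneg
      linarith
    have h6 : n = 0 := inner_self_eq_zero.mp h3
    rw [← Lp.coeFn_nonneg]
    have h7 : (n : K → ℝ) =ᵐ[μ] 0 := by rw [h6]; exact Lp.coeFn_zero _ _ _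
    filter_upwards [Lp.coeFn_negPart (k y), h7] with a ha hb
    have h8 : -min (k y a) 0 = 0 := by rw [← ha, hb]; rfl
    have h9 : min (k y a) 0 = 0 := by linarith
    exact min_eq_right_iff.mp h9
  have hSsym := (hsa s hs).isSymmetric
  -- the continuous version of `S t (toLp f)`
  have hTt : ∀ f : C(K, ℝ),
      (S t (ContinuousMap.toLp 2 μ ℝ f) : K → ℝ) =ᵐ[μ] Tf (S s (ContinuousMap.toLp 2 μ ℝ f)) := by
    intro f
    have h2 : S t (ContinuousMap.toLp 2 μ ℝ f) = S s (S s (ContinuousMap.toLp 2 μ ℝ f)) := by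
      rw [← hts, hsg s s hs hs]
      rfl
    rw [h2]
    exact hTf _
  -- the fundamental calculation
  have hcalc : ∀ (y : K) (f : C(K, ℝ)),
      Tf (S s (ContinuousMap.toLp 2 μ ℝ f)) y = ∫ a, Tf (k y) a * f a ∂μ := by
    intro y f
    calc Tf (S s (ContinuousMap.toLp 2 μ ℝ f)) y
        = ⟪k y, S s (ContinuousMap.toLp 2 μ ℝ f)⟫ := (hk y _).symm
      _ = ⟪S s (k y), ContinuousMap.toLp 2 μ ℝ f⟫ := (hSsym (k y) _).symm
      _ = ⟪ContinuousMap.toLp 2 μ ℝ (Tf (k y)), ContinuousMap.toLp 2 μ ℝ f⟫ := by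
          rw [hTLp (k y)]
      _ = ∫ a, (ContinuousMap.toLp 2 μ ℝ (Tf (k y)) : K → ℝ) a *
            (ContinuousMap.toLp 2 μ ℝ f : K → ℝ) a ∂μ := hinner _ _
      _ = ∫ a, Tf (k y) a * f a ∂μ := by
          apply integral_congr_ae
          filter_upwards [ContinuousMap.coeFn_toLp (p := 2) (𝕜 := ℝ) μ (Tf (k y)),
            ContinuousMap.coeFn_toLp (p := 2) (𝕜 := ℝ) μ f]
            with a ha hb
          rw [ha, hb]
  -- the key vanishing property
  have hw0 : ∀ y ∈ B, ∀ z ∈ closure U, Tf (k y) z = 0 := by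
    intro y hy
    have key : ∀ f : C(K, ℝ), (∀ x' ∈ B, f x' = 0) → ∫ a, Tf (k y) a * f a ∂μ = 0 := by
      intro f hf
      have h1 : Tf (S s (ContinuousMap.toLp 2 μ ℝ f)) y = 0 :=
        Hinv t ht f hf (Tf (S s (ContinuousMap.toLp 2 μ ℝ f))) (hTt f) y hy
      rw [← hcalc y f]
      exact h1
    have wpos : ∀ z, 0 ≤ Tf (k y) z := hTpos (k y) (hknonneg y)
    have hzeroU : ∀ z ∈ U, Tf (k y) z = 0 := by
      intro z hz
      by_contra hne
      obtain ⟨f, hf0, hf1, hf01⟩ := exists_continuous_zero_one_of_isClosed hBclosed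
        isClosed_singleton (Set.disjoint_singleton_right.mpr hz)
      have hint : ∫ a, Tf (k y) a * f a ∂μ = 0 := key f (fun x' hx' => hf0 hx')
      have hnonneg : ∀ a, 0 ≤ Tf (k y) a * f a := fun a =>
        mul_nonneg (wpos a) (hf01 a).1
      have hcont : Continuous fun a => Tf (k y) a * f a :=
        (Tf (k y)).continuous.mul f.continuous
      have hintg : Integrable (fun a => Tf (k y) a * f a) μ :=
        hcont.integrable_of_hasCompactSupport (HasCompactSupport.of_compactSpace _)
      have hzsupp : z ∈ Function.support fun a => Tf (k y) a * f a := by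
        simp only [Function.mem_support]
        have : f z = 1 := hf1 rfl
        rw [this, mul_one]
        exact hne
      have hsopen : IsOpen (Function.support fun a => Tf (k y) a * f a) := by
        have : (Function.support fun a => Tf (k y) a * f a) =
            (fun a => Tf (k y) a * f a) ⁻¹' ({0}ᶜ) := by
          ext a
          simp [Function.mem_support]
        rw [this]
        exact isOpen_compl_singleton.preimage hcont
      have hμpos : 0 < μ (Function.support fun a => Tf (k y) a * f a) :=
        hsupp _ hsopen ⟨z, hzsupp⟩
      have := (integral_pos_iff_support_of_nonneg hnonneg hintg).mpr hμpos
      rw [hint] at this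
      exact lt_irrefl 0 this
    intro z hzc
    have hsub : closure U ⊆ {z | Tf (k y) z = 0} :=
      closure_minimal (fun z' hz' => hzeroU z' hz')
        (isClosed_eq (Tf (k y)).continuous continuous_const)
    exact hsub hzc
  -- the kernel at `x` vanishes identically
  have hwx : ∀ z, Tf (k x) z = 0 := by
    intro z
    by_cases hz : z ∈ closure U
    · exact hw0 x hxB z hz
    · have hzB : z ∈ B := by
        by_contra hzB
        exact hz (subset_closure hzB)
      have h1 : Tf (k x) z = ⟪k z, k x⟫ := (hk z (k x)).symm
      rw [h1, real_inner_comm, hk x (k z)]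
      exact hw0 z hzB x hxU
  -- contradiction
  have hg₀eq : g₀ = Tf (S s (ContinuousMap.toLp 2 μ ℝ f₀)) :=
    huniq _ _ (hfg₀.symm.trans (hTt f₀))
  apply hg₀x
  rw [hg₀eq, hcalc x f₀]
  simp only [hwx, zero_mul]
  exact integral_zero K ℝ
end

section
/- Let Ω ⊂ ℝ^d be bounded open connected with Lipschitz boundary Γ, with the standing assumptions making the Dirichlet-to-Neumann semigroup S^V on L²(Γ) positive, with S^V_t L²(Γ) ⊆ C(Γ) for all t > 0, with a strictly positive continuous first eigenfunction φ₁ (min_Γ φ₁ > 0, D_V φ₁ = λ₁ φ₁), and with S^V irreducible on L²(Γ). Then the restriction T^V of S^V to C(Γ) is irreducible: there is no closed subset Γ₁ ⊆ Γ with ∅ ≠ Γ₁ ≠ Γ such that {φ ∈ C(Γ) : φ|_{Γ₁} = 0} is invariant under all T^V_t. -/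
open MeasureTheory ENNReal Filter

/-- Dominated convergence in `L²`-seminorm. -/
private lemma dct2 {Γ : Type*} [MeasurableSpace Γ] {μ : Measure Γ}
    {u : ℕ → Γ → ℝ} {g : Γ → ℝ}
    (hmeas : ∀ n, AEStronglyMeasurable (u n) μ) (hg : MemLp g 2 μ)
    (hb : ∀ n, ∀ᵐ z ∂μ, ‖u n z‖ ≤ ‖g z‖)
    (hae : ∀ᵐ z ∂μ, Tendsto (fun n => u n z) atTop (nhds 0)) :
    Tendsto (fun n => eLpNorm (u n) 2 μ) atTop (nhds 0) := by
  have hp0 : (2 : ℝ≥0∞) ≠ 0 := by norm_num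
  have hpt : (2 : ℝ≥0∞) ≠ ∞ := by norm_num
  set c : ℝ := (2 : ℝ≥0∞).toReal with hc
  have hcpos : 0 < c := ENNReal.toReal_pos hp0 hpt
  have key : Tendsto (fun n => ∫⁻ z, (‖u n z‖₊ : ℝ≥0∞) ^ c ∂μ) atTop (nhds 0) := by
    have := tendsto_lintegral_of_dominated_convergence' (μ := μ)
      (F := fun n z => (‖u n z‖₊ : ℝ≥0∞) ^ c) (f := fun _ => 0)
      (fun z => (‖g z‖₊ : ℝ≥0∞) ^ c)
      (fun n => (ENNReal.continuous_rpow_const.measurable.comp_aemeasurable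
        (hmeas n).enorm))
      (fun n => by
        filter_upwards [hb n] with z hz
        exact ENNReal.rpow_le_rpow (by exact_mod_cast hz) hcpos.le)
      (lintegral_rpow_enorm_lt_top_of_eLpNorm_lt_top hp0 hpt hg.2).ne
      (by
        filter_upwards [hae] with z hz
        have h1 : Tendsto (fun n => (‖u n z‖₊ : ℝ≥0∞)) atTop (nhds 0) := by
          have := hz.nnnorm
          simpa using ENNReal.tendsto_coe.mpr this
        have h2 := (ENNReal.continuous_rpow_const (y := c)).tendsto (0 : ℝ≥0∞)
        have := h2.comp h1
        simpa [Function.comp_def, ENNReal.zero_rpow_of_pos hcpos] using this)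
    simpa using this
  have h2 := (ENNReal.continuous_rpow_const (y := 1 / c)).tendsto (0 : ℝ≥0∞)
  have h3 := h2.comp key
  have h4 : Tendsto (fun n => (∫⁻ z, (‖u n z‖₊ : ℝ≥0∞) ^ c ∂μ) ^ c⁻¹)
     atTop (nhds 0) := by
    simpa [Function.comp_def, ENNReal.zero_rpow_of_pos (by positivity : (0:ℝ) < c⁻¹), one_div]
      using h3
  have hc2 : c = 2 := by simp [hc]
  rw [hc2] at h4
  simpa [eLpNorm_eq_lintegral_rpow_enorm_toReal hp0 hpt, one_div, enorm_eq_nnnorm] using h4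

/-- Let `Γ` be the (compact metric) boundary, with finite Borel measure of
full support.  Let `S^V` be the positive `C₀`-semigroup generated by `−D_V` on `L²(Γ)`, with
`S^V_t L²(Γ) ⊆ C(Γ)` for all `t > 0`, with a strictly positive continuous first eigenfunction
`φ₁` (`S^V_t φ₁ = e^{-λ₁ t} φ₁`, `min φ₁ > 0`), and with `S^V` irreducible on `L²(Γ)`.
Then the restriction `T^V` of `S^V` to `C(Γ)` is irreducible: there is no closed
`Γ₁ ⊆ Γ` with `∅ ≠ Γ₁ ≠ Γ` such that `{φ ∈ C(Γ) : φ|_{Γ₁} = 0}` is invariant under all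
`T^V_t`. -/
theorem stmt19
    {Γ : Type*} [MetricSpace Γ] [CompactSpace Γ] [MeasurableSpace Γ] [BorelSpace Γ]
    (μ : Measure Γ) [IsFiniteMeasure μ]
    (hsupp : ∀ U : Set Γ, IsOpen U → U.Nonempty → 0 < μ U)
    (S : ℝ → Lp ℝ 2 μ →L[ℝ] Lp ℝ 2 μ)
    (hsg : ∀ t s : ℝ, 0 < t → 0 < s → S (t + s) = (S t).comp (S s))
    (hc0 : ∀ f : Lp ℝ 2 μ, Tendsto (fun t => S t f) (nhdsWithin 0 (Set.Ioi 0)) (nhds f))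
    (hsa : ∀ t : ℝ, 0 < t → IsSelfAdjoint (S t))
    (hpos : ∀ t : ℝ, 0 < t → ∀ f : Lp ℝ 2 μ, 0 ≤ f → 0 ≤ S t f)
    (hreg : ∀ t : ℝ, 0 < t → ∀ f : Lp ℝ 2 μ, ∃ g : C(Γ, ℝ), (S t f : Γ → ℝ) =ᵐ[μ] g)
    (φ₁ : C(Γ, ℝ)) (lam : ℝ)
    (hφ₁pos : ∀ z : Γ, 0 < φ₁ z)
    (hφ₁eig : ∀ t : ℝ, 0 < t →
      S t (ContinuousMap.toLp 2 μ ℝ φ₁) = Real.exp (-(lam * t)) • ContinuousMap.toLp 2 μ ℝ φ₁)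
    -- `S^V` is irreducible on `L²(Γ)`
    (hirrL2 : ∀ Y₁ : Set Γ, MeasurableSet Y₁ →
      (∀ t : ℝ, 0 < t → ∀ f : Lp ℝ 2 μ,
        (∀ᵐ z ∂μ, z ∉ Y₁ → (f : Γ → ℝ) z = 0) →
        (∀ᵐ z ∂μ, z ∉ Y₁ → (S t f : Γ → ℝ) z = 0)) →
      μ Y₁ = 0 ∨ μ Y₁ᶜ = 0) :
    ∀ Γ₁ : Set Γ, IsClosed Γ₁ → Γ₁.Nonempty → Γ₁ ≠ Set.univ →
      ¬ (∀ t : ℝ, 0 < t → ∀ f : C(Γ, ℝ), (∀ z ∈ Γ₁, f z = 0) →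
          ∀ g : C(Γ, ℝ), (S t (ContinuousMap.toLp 2 μ ℝ f) : Γ → ℝ) =ᵐ[μ] g →
          ∀ z ∈ Γ₁, g z = 0) := by
  intro Γ₁ hΓ₁closed hΓ₁ne hΓ₁univ hinv
  haveI : μ.IsOpenPosMeasure := ⟨fun U hU hne => (hsupp U hU hne).ne'⟩
  -- uniqueness of continuous representatives
  have huniq : ∀ g₁ g₂ : C(Γ, ℝ), (g₁ : Γ → ℝ) =ᵐ[μ] (g₂ : Γ → ℝ) → g₁ = g₂ := by
    intro g₁ g₂ h
    ext z
    exact congrFun ((g₁.continuous.ae_eq_iff_eq μ g₂.continuous).mp h) z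
  choose G hG using hreg
  -- cutoff functions vanishing on Γ₁ and increasing to 1 off Γ₁
  let χ : ℕ → C(Γ, ℝ) := fun n =>
    ⟨fun z => min ((n : ℝ) * Metric.infDist z Γ₁) 1,
      (continuous_const.mul (Metric.continuous_infDist_pt Γ₁)).min continuous_const⟩
  have hχ0 : ∀ n, ∀ z ∈ Γ₁, χ n z = 0 := by
    intro n z hz
    simp [χ, Metric.infDist_zero_of_mem hz]
  have hχ01 : ∀ (n : ℕ) (z : Γ), 0 ≤ χ n z ∧ χ n z ≤ 1 := by
    intro n z
    refine ⟨le_min (mul_nonneg (Nat.cast_nonneg n) Metric.infDist_nonneg) zero_le_one, min_le_right _ _⟩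
  have hχnorm : ∀ (n : ℕ) (z : Γ), ‖χ n z‖ ≤ 1 := by
    intro n z
    rw [Real.norm_eq_abs, abs_le]
    exact ⟨by linarith [(hχ01 n z).1], (hχ01 n z).2⟩
  have hχlim : ∀ z, z ∉ Γ₁ → Tendsto (fun n => χ n z) atTop (nhds 1) := by
    intro z hz
    have hd : 0 < Metric.infDist z Γ₁ :=
      (hΓ₁closed.notMem_iff_infDist_pos hΓ₁ne).mp hz
    have hev : ∀ᶠ n : ℕ in atTop, χ n z = 1 := by
      obtain ⟨N, hN⟩ := exists_nat_gt (1 / Metric.infDist z Γ₁)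
      filter_upwards [eventually_ge_atTop N] with n hn
      have h1 : (1 : ℝ) / Metric.infDist z Γ₁ ≤ (n : ℝ) := le_trans hN.le (by exact_mod_cast hn)
      have h2 : (1 : ℝ) ≤ (n : ℝ) * Metric.infDist z Γ₁ := by
        rw [div_le_iff₀ hd] at h1
        linarith
      simp [χ, min_eq_right h2]
    exact tendsto_const_nhds.congr' (hev.mono fun n h => h.symm)
  -- multiplication by the cutoffs, as maps of L²
  have memM : ∀ (n : ℕ) (f : Lp ℝ 2 μ), MemLp (fun z => (f : Γ → ℝ) z * χ n z) 2 μ := by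
    intro n f
    refine (Lp.memLp f).of_le
      ((Lp.aestronglyMeasurable f).mul (χ n).continuous.aestronglyMeasurable) ?_
    filter_upwards with z
    rw [norm_mul]
    exact mul_le_of_le_one_right (norm_nonneg _) (hχnorm n z)
  let M : ℕ → Lp ℝ 2 μ → Lp ℝ 2 μ := fun n f => (memM n f).toLp _
  have hM_coe : ∀ (n : ℕ) (f : Lp ℝ 2 μ),
      (M n f : Γ → ℝ) =ᵐ[μ] fun z => (f : Γ → ℝ) z * χ n z :=
    fun n f => (memM n f).coeFn_toLp
  have hMdist : ∀ (n : ℕ) (f g : Lp ℝ 2 μ), ‖M n f - M n g‖ ≤ ‖f - g‖ := by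
    intro n f g
    rw [Lp.norm_def, Lp.norm_def]
    apply ENNReal.toReal_mono (Lp.eLpNorm_ne_top _)
    calc eLpNorm (⇑(M n f - M n g)) 2 μ
        = eLpNorm (fun z => ((f : Γ → ℝ) z - (g : Γ → ℝ) z) * χ n z) 2 μ := by
          apply eLpNorm_congr_ae
          filter_upwards [Lp.coeFn_sub (M n f) (M n g), hM_coe n f, hM_coe n g] with z e1 e2 e3
          rw [e1, Pi.sub_apply, e2, e3]
          ring
      _ ≤ eLpNorm (fun z => (f : Γ → ℝ) z - (g : Γ → ℝ) z) 2 μ := by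
          apply eLpNorm_mono_ae
          filter_upwards with z
          rw [norm_mul]
          exact mul_le_of_le_one_right (norm_nonneg _) (hχnorm n z)
      _ = eLpNorm (⇑(f - g)) 2 μ := (eLpNorm_congr_ae (Lp.coeFn_sub f g)).symm
  have hMcont : ∀ n : ℕ, Continuous (M n) := by
    intro n
    refine (LipschitzWith.of_dist_le_mul (K := 1) fun f g => ?_).continuous
    rw [dist_eq_norm, dist_eq_norm]
    simpa using hMdist n f g
  -- main pointwise vanishing claim
  have key : ∀ (t : ℝ) (ht : 0 < t) (f : Lp ℝ 2 μ),
      (∀ᵐ z ∂μ, z ∈ Γ₁ → (f : Γ → ℝ) z = 0) → ∀ z ∈ Γ₁, G t ht f z = 0 := by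
    intro t ht
    set Gl : Lp ℝ 2 μ →ₗ[ℝ] C(Γ, ℝ) :=
      { toFun := G t ht
        map_add' := by
          intro f g
          apply huniq
          have hadd : (S t (f + g) : Γ → ℝ) =ᵐ[μ]
              fun z => (S t f : Γ → ℝ) z + (S t g : Γ → ℝ) z := by
            rw [map_add]
            exact Lp.coeFn_add (S t f) (S t g)
          filter_upwards [hG t ht (f + g), hadd, hG t ht f, hG t ht g] with z e1 e2 e3 e4
          show G t ht (f + g) z = G t ht f z + G t ht g z
          rw [← e1, e2, e3, e4]
        map_smul' := by
          intro c f
          apply huniq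
          have hsmul : (S t (c • f) : Γ → ℝ) =ᵐ[μ] fun z => c * (S t f : Γ → ℝ) z := by
            rw [_root_.map_smul]
            filter_upwards [Lp.coeFn_smul c (S t f)] with z e
            rw [e]
            rfl
          filter_upwards [hG t ht (c • f), hsmul, hG t ht f] with z e1 e2 e3
          show G t ht (c • f) z = c * G t ht f z
          rw [← e1, e2, e3] } with hGl
    have hGlcont : Continuous Gl := by
      apply Gl.continuous_of_seq_closed_graph
      intro u x y hux huy
      have h1 : ∀ n, (ContinuousMap.toLp 2 μ ℝ) (Gl (u n)) = S t (u n) := by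
        intro n
        apply Lp.ext
        exact (ContinuousMap.coeFn_toLp (𝕜 := ℝ) (p := 2) μ (Gl (u n))).trans (hG t ht (u n)).symm
      have h2 : Tendsto (fun n => (ContinuousMap.toLp 2 μ ℝ) (Gl (u n))) atTop
          (nhds ((ContinuousMap.toLp 2 μ ℝ) y)) :=
        ((ContinuousMap.toLp 2 μ ℝ).continuous.tendsto y).comp huy
      have h3 : Tendsto (fun n => S t (u n)) atTop (nhds (S t x)) :=
        ((S t).continuous.tendsto x).comp hux
      have h4 : (ContinuousMap.toLp 2 μ ℝ) y = S t x := by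
        refine tendsto_nhds_unique ?_ h3
        simpa only [h1] using h2
      apply huniq
      calc (y : Γ → ℝ) =ᵐ[μ] ⇑(ContinuousMap.toLp 2 μ ℝ y) :=
            (ContinuousMap.coeFn_toLp (𝕜 := ℝ) (p := 2) μ y).symm
        _ =ᵐ[μ] ⇑(G t ht x) := by
            rw [h4]
            exact hG t ht x
    -- vanishing on Γ₁ for cutoff multiples
    have claimM : ∀ (n : ℕ) (f : Lp ℝ 2 μ), ∀ z ∈ Γ₁, G t ht (M n f) z = 0 := by
      intro n f z hz
      have hc : Continuous fun f : Lp ℝ 2 μ => (Gl (M n f)) z :=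
        (continuous_eval_const z).comp (hGlcont.comp (hMcont n))
      have hAclosed : IsClosed {f : Lp ℝ 2 μ | (Gl (M n f)) z = 0} :=
        isClosed_eq hc continuous_const
      have hball : Set.range (ContinuousMap.toLp (E := ℝ) 2 μ ℝ) ⊆
          {f : Lp ℝ 2 μ | (Gl (M n f)) z = 0} := by
        rintro _ ⟨h, rfl⟩
        have hMh : M n (ContinuousMap.toLp 2 μ ℝ h) = ContinuousMap.toLp 2 μ ℝ (h * χ n) := by
          apply Lp.ext
          filter_upwards [hM_coe n (ContinuousMap.toLp 2 μ ℝ h),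
            ContinuousMap.coeFn_toLp (𝕜 := ℝ) (p := 2) μ h, ContinuousMap.coeFn_toLp (𝕜 := ℝ) (p := 2) μ (h * χ n)] with w e1 e2 e3
          rw [e1, e2, e3, ContinuousMap.mul_apply]
        show G t ht (M n (ContinuousMap.toLp 2 μ ℝ h)) z = 0
        rw [hMh]
        refine hinv t ht (h * χ n) ?_ _ (hG t ht _) z hz
        intro w hw
        rw [ContinuousMap.mul_apply, hχ0 n w hw, mul_zero]
      have hdense : ∀ f : Lp ℝ 2 μ,
          f ∈ closure (Set.range (ContinuousMap.toLp (E := ℝ) 2 μ ℝ)) :=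
        ContinuousMap.toLp_denseRange (p := 2) ℝ μ ℝ ENNReal.ofNat_ne_top
      exact closure_minimal hball hAclosed (hdense f)
    -- pass to the limit
    intro f hf z hz
    have hMtend : Tendsto (fun n => M n f) atTop (nhds f) := by
      rw [tendsto_iff_norm_sub_tendsto_zero]
      have hkey : Tendsto
          (fun n => eLpNorm (fun w => (f : Γ → ℝ) w * χ n w - (f : Γ → ℝ) w) 2 μ) atTop
          (nhds 0) := by
        refine dct2 (g := (f : Γ → ℝ))
          (fun n => ((Lp.aestronglyMeasurable f).mul
            (χ n).continuous.aestronglyMeasurable).sub (Lp.aestronglyMeasurable f))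
          (Lp.memLp f) (fun n => ?_) ?_
        · filter_upwards with w
          have h01 := hχ01 n w
          rw [Real.norm_eq_abs, Real.norm_eq_abs]
          have he : (f : Γ → ℝ) w * χ n w - (f : Γ → ℝ) w = (f : Γ → ℝ) w * (χ n w - 1) := by
            ring
          rw [he, abs_mul]
          refine mul_le_of_le_one_right (abs_nonneg _) ?_
          rw [abs_le]
          constructor <;> linarith [h01.1, h01.2]
        · filter_upwards [hf] with w hw
          by_cases hmem : w ∈ Γ₁
          · simp [hw hmem]
          · have h1 := hχlim w hmem
            have h2 : Tendsto (fun n => (f : Γ → ℝ) w * χ n w - (f : Γ → ℝ) w) atTop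
                (nhds ((f : Γ → ℝ) w * 1 - (f : Γ → ℝ) w)) :=
              (tendsto_const_nhds.mul h1).sub tendsto_const_nhds
            simpa using h2
      have hnorm : (fun n => ‖M n f - f‖) =
          fun n => (eLpNorm (fun w => (f : Γ → ℝ) w * χ n w - (f : Γ → ℝ) w) 2 μ).toReal := by
        funext n
        rw [Lp.norm_def]
        congr 1
        apply eLpNorm_congr_ae
        filter_upwards [Lp.coeFn_sub (M n f) f, hM_coe n f] with w e1 e2
        rw [e1, Pi.sub_apply, e2]
      rw [hnorm]
      have := (ENNReal.tendsto_toReal (by simp : (0 : ℝ≥0∞) ≠ ∞)).comp hkey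
      simpa [Function.comp_def] using this
    have h2 : Tendsto (fun n => (Gl (M n f)) z) atTop (nhds ((Gl f) z)) :=
      (((continuous_eval_const z).comp hGlcont).tendsto f).comp hMtend
    have h3 : Tendsto (fun n => (Gl (M n f)) z) atTop (nhds 0) :=
      tendsto_const_nhds.congr fun n => (claimM n f z hz).symm
    exact (tendsto_nhds_unique h2 h3 : (Gl f) z = 0)
  -- Step B : μ Γ₁ = 0 by L²-irreducibility
  have hμΓ₁ : μ Γ₁ = 0 := by
    have hprem : ∀ t : ℝ, 0 < t → ∀ f : Lp ℝ 2 μ,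
        (∀ᵐ z ∂μ, z ∉ Γ₁ᶜ → (f : Γ → ℝ) z = 0) →
        (∀ᵐ z ∂μ, z ∉ Γ₁ᶜ → (S t f : Γ → ℝ) z = 0) := by
      intro t ht f hf
      have hf' : ∀ᵐ z ∂μ, z ∈ Γ₁ → (f : Γ → ℝ) z = 0 := by
        filter_upwards [hf] with z hz hmem
        exact hz (by simp [hmem])
      filter_upwards [hG t ht f] with z hz hmem
      rw [hz]
      exact key t ht f hf' z (by simpa using hmem)
    rcases hirrL2 Γ₁ᶜ hΓ₁closed.measurableSet.compl hprem with h | h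
    · exfalso
      have hne : Γ₁ᶜ.Nonempty := Set.nonempty_compl.mpr hΓ₁univ
      exact absurd h (hsupp Γ₁ᶜ hΓ₁closed.isOpen_compl hne).ne'
    · simpa using h
  -- final contradiction at t = 1
  obtain ⟨x₀, hx₀⟩ := hΓ₁ne
  have hvac : ∀ᵐ z ∂μ, z ∈ Γ₁ → ((ContinuousMap.toLp 2 μ ℝ φ₁ : Lp ℝ 2 μ) : Γ → ℝ) z = 0 := by
    have hae : ∀ᵐ z ∂μ, z ∉ Γ₁ := by
      rw [ae_iff]
      simpa using hμΓ₁
    filter_upwards [hae] with z hz hmem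
    exact absurd hmem hz
  have h0 := key 1 one_pos (ContinuousMap.toLp 2 μ ℝ φ₁) hvac x₀ hx₀
  have hGφ : G 1 one_pos (ContinuousMap.toLp 2 μ ℝ φ₁) = Real.exp (-(lam * 1)) • φ₁ := by
    apply huniq
    refine (hG 1 one_pos _).symm.trans ?_
    rw [hφ₁eig 1 one_pos]
    filter_upwards [Lp.coeFn_smul (Real.exp (-(lam * 1))) (ContinuousMap.toLp 2 μ ℝ φ₁),
      ContinuousMap.coeFn_toLp (𝕜 := ℝ) (p := 2) μ φ₁] with z e1 e2
    rw [e1, Pi.smul_apply, e2]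
    rfl
  rw [hGφ] at h0
  have hpos' : 0 < Real.exp (-(lam * 1)) * φ₁ x₀ := mul_pos (Real.exp_pos _) (hφ₁pos x₀)
  rw [ContinuousMap.smul_apply, smul_eq_mul] at h0
  linarith
end
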